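/- (μ-smooth approximation is uniformly close to the original function.) Let d : ℕ, L ≥ 0 and μ : ℝ, and let f : EuclideanSpace ℝ (Fin d) → ℝ have L-Lipschitz gradient. Then for every x, the map u ↦ f(x + μ • u) is γ_d-integrable, and |∫ f(x + μ • u) ∂γ_d(u) − f(x)| ≤ (μ² · L · d)/2. In other words, the μ-smooth approximation f_μ(x) := ∫ f(x + μ • u) ∂γ_d(u) satisfies |f_μ(x) − f(x)| ≤ μ²·L·d/2 for every x. -/

import Mathlib

open MeasureTheory RealInnerProductSpace

/-- The standard Gaussian measure on `EuclideanSpace ℝ (Fin d)`, i.e. the product of `d`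
copies of the real standard Gaussian measure. -/
noncomputable def stdGaussian (d : ℕ) : Measure (EuclideanSpace ℝ (Fin d)) :=
  Measure.map (MeasurableEquiv.toLp 2 (Fin d → ℝ))
    (Measure.pi (fun _ : Fin d => ProbabilityTheory.gaussianReal 0 1))

section GaussianMoments

open ProbabilityTheory Real
open scoped ENNReal NNReal

private lemma pdf01 :
    gaussianPDFReal 0 1 = fun x => (Real.sqrt (2*π))⁻¹ * Real.exp (-(2⁻¹) * x^2) := by
  ext x
  simp only [gaussianPDFReal, NNReal.coe_one, mul_one, sub_zero]
  ring_nf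

private lemma gaussianReal01_eq : gaussianReal (0:ℝ) 1
    = volume.withDensity (fun x => ((gaussianPDFReal 0 1 x).toNNReal : ℝ≥0∞)) := by
  rw [gaussianReal_of_var_ne_zero 0 one_ne_zero]
  rfl

private lemma meas_nn : Measurable (fun x => (gaussianPDFReal 0 1 x).toNNReal) :=
  (measurable_gaussianPDFReal 0 1).real_toNNReal

private lemma smul_eq_mul_pdf (g : ℝ → ℝ) (x : ℝ) :
    (gaussianPDFReal 0 1 x).toNNReal • g x = gaussianPDFReal 0 1 x * g x := by
  rw [NNReal.smul_def, smul_eq_mul, Real.coe_toNNReal _ (gaussianPDFReal_nonneg 0 1 x)]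

private lemma integrable_gauss_iff (g : ℝ → ℝ) :
    Integrable g (gaussianReal (0:ℝ) 1) ↔
      Integrable (fun x => gaussianPDFReal 0 1 x * g x) volume := by
  rw [gaussianReal01_eq, integrable_withDensity_iff_integrable_smul meas_nn]
  simp_rw [smul_eq_mul_pdf]

private lemma integral_gauss (g : ℝ → ℝ) :
    ∫ x, g x ∂(gaussianReal (0:ℝ) 1) = ∫ x, gaussianPDFReal 0 1 x * g x := by
  rw [gaussianReal01_eq, integral_withDensity_eq_integral_smul meas_nn]
  simp_rw [smul_eq_mul_pdf]

private lemma integrable_id_gauss : Integrable (fun x => x) (gaussianReal (0:ℝ) 1) := by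
  rw [integrable_gauss_iff, pdf01]
  have h : Integrable (fun x : ℝ => x * rexp (-(2⁻¹) * x^2)) volume :=
    integrable_mul_exp_neg_mul_sq (by norm_num)
  exact (h.const_mul (√(2*π))⁻¹).congr (Filter.Eventually.of_forall fun x => by ring)

private lemma integral_id_gauss : ∫ x, x ∂(gaussianReal (0:ℝ) 1) = 0 := by
  rw [integral_gauss, pdf01]
  set F : ℝ → ℝ := fun x => (√(2*π))⁻¹ * rexp (-(2⁻¹) * x^2) * x with hF
  have h := integral_neg_eq_self F (volume : Measure ℝ)
  have h2 : ∀ x, F (-x) = - F x := fun x => by simp only [hF, neg_sq, neg_neg]; ring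
  simp_rw [h2, integral_neg] at h
  linarith

private lemma integrable_sq_gauss : Integrable (fun x => x^2) (gaussianReal (0:ℝ) 1) := by
  rw [integrable_gauss_iff, pdf01]
  have h : Integrable (fun x : ℝ => x ^ (2:ℝ) * rexp (-(2⁻¹) * x^2)) volume :=
    integrable_rpow_mul_exp_neg_mul_sq (by norm_num) (by norm_num)
  simp only [show (2:ℝ) = ((2:ℕ):ℝ) by norm_num, Real.rpow_natCast] at h
  exact (h.const_mul (√(2*π))⁻¹).congr (Filter.Eventually.of_forall fun x => by ring)

private lemma integral_sq_exp : ∫ x : ℝ, x^2 * rexp (-(2⁻¹) * x^2) = √(2*π) := by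
  have h1 : ∫ x : ℝ, x^2 * rexp (-(2⁻¹) * x^2)
      = 2 * ∫ x in Set.Ioi (0:ℝ), x^2 * rexp (-(2⁻¹) * x^2) := by
    rw [← integral_comp_abs (f := fun x => x^2 * rexp (-(2⁻¹) * x^2))]
    congr 1; ext x; rw [sq_abs]
  have h2 := integral_rpow_mul_exp_neg_mul_rpow (p:=2) (q:=2) (b:=2⁻¹)
    (by norm_num) (by norm_num) (by norm_num)
  simp only [show (2:ℝ) = ((2:ℕ):ℝ) by norm_num, Real.rpow_natCast] at h2
  push_cast at h2
  rw [h1, h2]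
  rw [show ((2:ℝ)+1)/2 = 1/2 + 1 by norm_num, Real.Gamma_add_one (by norm_num),
    Real.Gamma_one_half_eq]
  rw [show (-((2:ℝ)+1)/2) = -(3/2) by norm_num, Real.rpow_neg (by norm_num),
    Real.inv_rpow (by norm_num), inv_inv]
  rw [show (3:ℝ)/2 = 1 + 1/2 by norm_num, Real.rpow_add (by norm_num), Real.rpow_one,
    Real.sqrt_mul (by norm_num)]
  rw [show √2 = 2 ^ (2⁻¹:ℝ) from by rw [Real.sqrt_eq_rpow]; norm_num]
  ring

private lemma integral_sq_gauss : ∫ x, x^2 ∂(gaussianReal (0:ℝ) 1) = 1 := by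
  rw [integral_gauss, pdf01]
  have h : ∫ x : ℝ, (√(2*π))⁻¹ * rexp (-(2⁻¹) * x^2) * x^2
      = (√(2*π))⁻¹ * ∫ x : ℝ, x^2 * rexp (-(2⁻¹) * x^2) := by
    rw [← integral_const_mul]; congr 1; ext x; ring
  rw [h, integral_sq_exp, inv_mul_cancel₀]
  positivity

end GaussianMoments

section StdGaussianFacts

open ProbabilityTheory

instance stdGaussian_isProbabilityMeasure (d : ℕ) : IsProbabilityMeasure (stdGaussian d) :=
  Measure.isProbabilityMeasure_map (MeasurableEquiv.toLp 2 (Fin d → ℝ)).measurable.aemeasurable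

private lemma measurable_eval' (d : ℕ) (i : Fin d) :
    Measurable (fun u : EuclideanSpace ℝ (Fin d) => u i) :=
  (measurable_pi_apply i).comp (WithLp.measurable_ofLp 2 (Fin d → ℝ))

private lemma pi_map_eval (d : ℕ) (i : Fin d) :
    (Measure.pi (fun _ : Fin d => gaussianReal (0:ℝ) 1) : Measure (Fin d → ℝ)).map
      (Function.eval i) = gaussianReal 0 1 := by
  refine Measure.ext fun s hs => ?_
  rw [Measure.map_apply (measurable_pi_apply i) hs]
  have hpre : Function.eval i ⁻¹' s
      = Set.pi Set.univ (Function.update (fun _ : Fin d => (Set.univ : Set ℝ)) i s) := by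
    ext u
    simp only [Set.mem_preimage, Set.mem_univ_pi, Function.eval]
    constructor
    · intro h j
      rcases eq_or_ne j i with rfl | hj
      · simpa using h
      · simp [Function.update_of_ne hj]
    · intro h
      have := h i
      simpa using this
  rw [hpre, Measure.pi_pi]
  rw [Finset.prod_eq_single i (fun j _ hj => by simp [Function.update_of_ne hj])
    (fun h => absurd (Finset.mem_univ i) h)]
  simp

private lemma stdGaussian_map_eval (d : ℕ) (i : Fin d) :
    (stdGaussian d).map (fun u => u i) = gaussianReal 0 1 := by
  rw [_root_.stdGaussian, Measure.map_map (measurable_eval' d i) (MeasurableEquiv.toLp 2 _).measurable]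
  exact pi_map_eval d i

private lemma integrable_eval_iff (d : ℕ) (i : Fin d) (g : ℝ → ℝ) (hg : Measurable g) :
    Integrable (fun u : EuclideanSpace ℝ (Fin d) => g (u i)) (stdGaussian d)
      ↔ Integrable g (gaussianReal 0 1) := by
  rw [← stdGaussian_map_eval d i,
    integrable_map_measure hg.aestronglyMeasurable (measurable_eval' d i).aemeasurable]
  rfl

private lemma integral_eval (d : ℕ) (i : Fin d) (g : ℝ → ℝ) (hg : Measurable g) :
    ∫ u, g (u i) ∂(stdGaussian d) = ∫ x, g x ∂(gaussianReal 0 1) := by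
  rw [← stdGaussian_map_eval d i,
    integral_map (measurable_eval' d i).aemeasurable hg.aestronglyMeasurable]

end StdGaussianFacts

section Taylor

variable {E : Type*} [NormedAddCommGroup E] [InnerProductSpace ℝ E] [CompleteSpace E]

private lemma taylor_bound {L : ℝ} (hL : 0 ≤ L) (f : E → ℝ)
    (hdiff : Differentiable ℝ f)
    (hlip : ∀ x y, ‖gradient f x - gradient f y‖ ≤ L * ‖x - y‖) (x y : E) :
    |f y - f x - ⟪gradient f x, y - x⟫| ≤ L / 2 * ‖y - x‖^2 := by
  set v := y - x with hv
  have hgc : Continuous (gradient f) := by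
    refine (LipschitzWith.of_dist_le_mul (K := L.toNNReal) fun a b => ?_).continuous
    rw [dist_eq_norm, dist_eq_norm, Real.coe_toNNReal _ hL]
    exact hlip a b
  have hline : ∀ t : ℝ, HasDerivAt (fun t : ℝ => f (x + t • v))
      ⟪gradient f (x + t • v), v⟫ t := by
    intro t
    have h1 : HasDerivAt (fun t : ℝ => x + t • v) v t := by
      simpa using ((hasDerivAt_id t).smul_const v).const_add x
    have h2 : HasFDerivAt f (InnerProductSpace.toDual ℝ E (gradient f (x + t • v)))
        (x + t • v) := (hdiff _).hasGradientAt.hasFDerivAt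
    have h3 := h2.comp_hasDerivAt t h1
    rw [InnerProductSpace.toDual_apply_apply] at h3
    exact h3
  have hcont : Continuous fun t : ℝ => ⟪gradient f (x + t • v), v⟫ := by
    exact (hgc.comp (by continuity)).inner continuous_const
  have key : (∫ t in (0:ℝ)..1, ⟪gradient f (x + t • v), v⟫) = f y - f x := by
    have h := intervalIntegral.integral_eq_sub_of_hasDerivAt
      (fun t _ => hline t) (hcont.intervalIntegrable 0 1)
    rw [h]
    norm_num [hv]
  have hsub : f y - f x - ⟪gradient f x, v⟫
      = ∫ t in (0:ℝ)..1, ⟪gradient f (x + t • v) - gradient f x, v⟫ := by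
    rw [← key]
    simp_rw [inner_sub_left]
    rw [intervalIntegral.integral_sub (hcont.intervalIntegrable 0 1)
      (continuous_const.intervalIntegrable 0 1), intervalIntegral.integral_const]
    simp
  rw [hsub]
  have hbnd : ∀ t ∈ Set.Ioc (0:ℝ) 1,
      ‖⟪gradient f (x + t • v) - gradient f x, v⟫‖ ≤ L * ‖v‖^2 * t := by
    intro t ht
    calc ‖⟪gradient f (x + t • v) - gradient f x, v⟫‖
        ≤ ‖gradient f (x + t • v) - gradient f x‖ * ‖v‖ := norm_inner_le_norm _ _
      _ ≤ (L * ‖x + t • v - x‖) * ‖v‖ := by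
          gcongr; exact hlip _ _
      _ = L * ‖v‖^2 * t := by
          rw [add_sub_cancel_left, norm_smul, Real.norm_eq_abs,
            abs_of_pos ht.1]
          ring
  have hgint : IntervalIntegrable (fun t : ℝ => L * ‖v‖^2 * t) volume 0 1 :=
    (continuous_const.mul continuous_id).intervalIntegrable 0 1
  have hae : ∀ᵐ t ∂(volume.restrict (Set.uIoc (0:ℝ) 1)),
      ‖⟪gradient f (x + t • v) - gradient f x, v⟫‖ ≤ L * ‖v‖^2 * t := by
    rw [Set.uIoc_of_le zero_le_one]
    exact (ae_restrict_mem measurableSet_Ioc).mono hbnd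
  have hI : ∫ t in (0:ℝ)..1, L * ‖v‖^2 * t = L * ‖v‖^2 / 2 := by
    rw [intervalIntegral.integral_const_mul, integral_id]
    norm_num
    ring
  calc |∫ t in (0:ℝ)..1, ⟪gradient f (x + t • v) - gradient f x, v⟫|
      = ‖∫ t in (0:ℝ)..1, ⟪gradient f (x + t • v) - gradient f x, v⟫‖ :=
        (Real.norm_eq_abs _).symm
    _ ≤ |∫ t in (0:ℝ)..1, L * ‖v‖^2 * t| :=
        intervalIntegral.norm_integral_le_abs_of_norm_le hae hgint
    _ = L / 2 * ‖v‖^2 := by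
        rw [hI, abs_of_nonneg (by positivity)]
        ring

end Taylor

/-- **μ-smooth approximation is uniformly close to the original function.**
If `f` has `L`-Lipschitz gradient, then for every `x` the map `u ↦ f (x + μ • u)` is
integrable against the standard Gaussian and the μ-smooth approximation
`f_μ(x) = ∫ f (x + μ • u) dγ_d(u)` satisfies `|f_μ(x) − f(x)| ≤ μ²·L·d/2`. -/
theorem smooth_approximation_close
    (d : ℕ) (L μ : ℝ) (hL : 0 ≤ L)
    (f : EuclideanSpace ℝ (Fin d) → ℝ)
    (hdiff : Differentiable ℝ f)
    (hlip : ∀ x y, ‖gradient f x - gradient f y‖ ≤ L * ‖x - y‖) :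
    ∀ x : EuclideanSpace ℝ (Fin d),
      Integrable (fun u => f (x + μ • u)) (stdGaussian d) ∧
      |(∫ u, f (x + μ • u) ∂(stdGaussian d)) - f x| ≤ μ ^ 2 * L * (d : ℝ) / 2 := by
  intro x
  set γ := stdGaussian d
  set g : EuclideanSpace ℝ (Fin d) := gradient f x with hg
  -- the remainder term
  set R : EuclideanSpace ℝ (Fin d) → ℝ :=
    fun u => f (x + μ • u) - f x - ⟪g, μ • u⟫ with hR
  have hRbound : ∀ u, |R u| ≤ L / 2 * μ^2 * (∑ i, (u i)^2) := by
    intro u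
    have h := taylor_bound hL f hdiff hlip x (x + μ • u)
    rw [add_sub_cancel_left] at h
    have hnorm : ‖μ • u‖^2 = μ^2 * ‖u‖^2 := by
      rw [norm_smul, mul_pow, Real.norm_eq_abs, sq_abs]
    have hnormsum : ‖u‖^2 = ∑ i, (u i)^2 := by
      rw [EuclideanSpace.norm_eq, Real.sq_sqrt (by positivity)]
      congr 1; ext i; rw [Real.norm_eq_abs, sq_abs]
    calc |R u| ≤ L / 2 * ‖μ • u‖^2 := h
      _ = L / 2 * μ^2 * (∑ i, (u i)^2) := by rw [hnorm, hnormsum]; ring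
  -- integrability of coordinate squares
  have hsq_i : ∀ i : Fin d, Integrable (fun u : EuclideanSpace ℝ (Fin d) => (u i)^2) γ :=
    fun i => (integrable_eval_iff d i (fun t => t^2) (measurable_id.pow_const 2)).2
      integrable_sq_gauss
  have hsumsq : Integrable (fun u : EuclideanSpace ℝ (Fin d) => ∑ i, (u i)^2) γ :=
    integrable_finset_sum _ (fun i _ => hsq_i i)
  -- integrability of the linear term
  have hlin_i : ∀ i : Fin d, Integrable (fun u : EuclideanSpace ℝ (Fin d) => g i * u i) γ :=
    fun i => ((integrable_eval_iff d i (fun t => t) measurable_id).2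
      integrable_id_gauss).const_mul (g i)
  have hinner_eq : ∀ u : EuclideanSpace ℝ (Fin d), ⟪g, μ • u⟫ = μ * ∑ i, g i * u i := by
    intro u
    rw [real_inner_smul_right, PiLp.inner_apply]
    congr 1
    refine Finset.sum_congr rfl fun i _ => ?_
    rw [real_inner_comm]
    rfl
  have hlin : Integrable (fun u : EuclideanSpace ℝ (Fin d) => ⟪g, μ • u⟫) γ := by
    have h := (integrable_finset_sum (μ := γ) Finset.univ
      (fun i _ => hlin_i i)).const_mul μ
    exact h.congr (Filter.Eventually.of_forall fun u => (hinner_eq u).symm)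
  have hlin_int : ∫ u, ⟪g, μ • u⟫ ∂γ = 0 := by
    simp_rw [hinner_eq]
    rw [integral_const_mul, integral_finset_sum _ (fun i _ => hlin_i i)]
    have : ∀ i : Fin d, ∫ u, g i * u i ∂γ = 0 := by
      intro i
      rw [integral_const_mul, integral_eval d i (fun t => t) measurable_id, integral_id_gauss,
        mul_zero]
    simp [this]
  -- integrability of R
  have hRcont : Continuous R := by
    have hfc : Continuous f := hdiff.continuous
    simp only [hR]
    fun_prop
  have hRint : Integrable R γ := by
    refine Integrable.mono' (hsumsq.const_mul (L / 2 * μ^2)) hRcont.aestronglyMeasurable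
      (Filter.Eventually.of_forall fun u => ?_)
    rw [Real.norm_eq_abs]
    exact hRbound u
  -- integrability of the main function
  have hA : Integrable (fun u => R u + f x) γ := by
    exact hRint.add (integrable_const (f x))
  have hB : Integrable (fun u => R u + f x + ⟪g, μ • u⟫) γ := by
    exact hA.add hlin
  have hfint : Integrable (fun u => f (x + μ • u)) γ := by
    refine hB.congr (Filter.Eventually.of_forall fun u => ?_)
    simp only [hR]
    ring
  refine ⟨hfint, ?_⟩
  -- compute the integral
  have hsplit : ∫ u, f (x + μ • u) ∂γ = (∫ u, R u ∂γ) + f x := by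
    have h1 : ∫ u, f (x + μ • u) ∂γ
        = ∫ u, (R u + f x + ⟪g, μ • u⟫) ∂γ := by
      congr 1; ext u; simp [hR]; ring
    rw [h1, integral_add hA hlin, integral_add hRint (integrable_const (f x)),
      hlin_int, integral_const]
    simp
  rw [hsplit, add_sub_cancel_right]
  have habs : |∫ u, R u ∂γ| ≤ ∫ u, L / 2 * μ^2 * (∑ i, (u i)^2) ∂γ := by
    have h1 : |∫ u, R u ∂γ| ≤ ∫ u, |R u| ∂γ := by
      simpa [Real.norm_eq_abs] using norm_integral_le_integral_norm (μ := γ) R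
    exact h1.trans (integral_mono hRint.abs (hsumsq.const_mul _) hRbound)
  have hval : ∫ u, L / 2 * μ^2 * (∑ i, (u i)^2) ∂γ = L / 2 * μ^2 * d := by
    rw [integral_const_mul, integral_finset_sum _ (fun i _ => hsq_i i)]
    have : ∀ i : Fin d, ∫ u, (u i)^2 ∂γ = 1 := fun i => by
      rw [integral_eval d i (fun t => t^2) (measurable_id.pow_const 2), integral_sq_gauss]
    simp [this]
  rw [hval] at habs
  calc |∫ u, R u ∂γ| ≤ L / 2 * μ^2 * d := habs
    _ = μ ^ 2 * L * (d : ℝ) / 2 := by ring
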